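/- Let A be a bounded self-adjoint operator and T a bounded operator on a complex Hilbert space, and let λ > 0. If the Ornstein–Zernike identity T = A + λ·(T ∘ A) holds, then the operator 1 − λA has a bounded inverse, T = A ∘ (1 − λA)⁻¹, and T commutes with A. -/

import Mathlib

set_option maxHeartbeats 1000000 in
/-- Solving the Ornstein–Zernike equation: if `A` is bounded self-adjoint, `T` is bounded,
`λ > 0` and `T = A + λ·(T ∘ A)`, then `1 - λA` has a bounded inverse `B`, `T = A ∘ B`, and
`T` commutes with `A`. -/
theorem oze_solution {E : Type*} [NormedAddCommGroup E] [InnerProductSpace ℂ E]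
    [CompleteSpace E]
    (A T : E →L[ℂ] E) (hA : IsSelfAdjoint A) (lam : ℝ) (hlam : 0 < lam)
    (hOZE : T = A + (lam : ℂ) • (T ∘L A)) :
    ∃ B : E →L[ℂ] E,
      B ∘L (1 - (lam : ℂ) • A) = 1 ∧ (1 - (lam : ℂ) • A) ∘L B = 1 ∧
      T = A ∘L B ∧ T ∘L A = A ∘L T := by
  set S : E →L[ℂ] E := 1 - (lam : ℂ) • A with hS
  -- `T ∘ S = A`
  have hTS : T ∘L S = A := by
    have h0 : T - (lam : ℂ) • (T ∘L A) = A := by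
      nth_rewrite 1 [hOZE]
      exact add_sub_cancel_right _ _
    calc T ∘L S = T * (1 - (lam : ℂ) • A) := rfl
      _ = T - (lam : ℂ) • (T * A) := by rw [mul_sub, mul_one, mul_smul_comm]
      _ = A := h0
  -- `S` is self-adjoint
  have hSsa : IsSelfAdjoint S := by
    have h : IsSelfAdjoint ((lam : ℂ) • A) := by
      rw [IsSelfAdjoint, star_smul, hA.star_eq, Complex.star_def, Complex.conj_ofReal]
    exact (IsSelfAdjoint.one (E →L[ℂ] E)).sub h
  -- the lower bound : `‖x‖ ≤ (1 + lam * ‖T‖) * ‖S x‖`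
  have hKpos : (0 : ℝ) < 1 + lam * ‖T‖ := by positivity
  have hbound : ∀ x : E, ‖x‖ ≤ (1 + lam * ‖T‖) * ‖S x‖ := by
    intro x
    have hx : x = S x + (lam : ℂ) • (T (S x)) := by
      have hAx : A x = T (S x) := by
        rw [← hTS]; rfl
      rw [← hAx, hS]
      simp only [ContinuousLinearMap.sub_apply, ContinuousLinearMap.one_apply,
        ContinuousLinearMap.smul_apply]
      abel
    calc ‖x‖ = ‖S x + (lam : ℂ) • (T (S x))‖ := by rw [← hx]
      _ ≤ ‖S x‖ + ‖(lam : ℂ) • (T (S x))‖ := norm_add_le _ _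
      _ = ‖S x‖ + lam * ‖T (S x)‖ := by
          rw [norm_smul, Complex.norm_real, Real.norm_of_nonneg hlam.le]
      _ ≤ ‖S x‖ + lam * (‖T‖ * ‖S x‖) := by
          gcongr
          exact T.le_opNorm _
      _ = (1 + lam * ‖T‖) * ‖S x‖ := by ring
  have hanti : AntilipschitzWith ⟨1 + lam * ‖T‖, hKpos.le⟩ S :=
    AddMonoidHomClass.antilipschitz_of_bound S hbound
  have hinj : Function.Injective S := hanti.injective
  -- dense range
  have hdense : S.range.topologicalClosure = ⊤ := by
    rw [Submodule.topologicalClosure_eq_top_iff, Submodule.eq_bot_iff]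
    intro x hx
    have hSx : S x = 0 := by
      have h1 : ∀ y : E, inner ℂ (S y) x = (0 : ℂ) := fun y => hx _ ⟨y, rfl⟩
      have h2 : inner ℂ (S x) (S x) = (0 : ℂ) := by
        rw [← ContinuousLinearMap.adjoint_inner_left S, hSsa.adjoint_eq]
        exact h1 (S x)
      exact inner_self_eq_zero.mp h2
    have : S x = S 0 := by simpa using hSx
    exact hinj this
  have hbij : Function.Bijective S := by
    rw [ContinuousLinearMap.bijective_iff_dense_range_and_antilipschitz]
    exact ⟨hdense, ⟨_, hanti⟩⟩
  -- the inverse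
  let e : E ≃L[ℂ] E := ContinuousLinearEquiv.ofBijective S
    (LinearMap.ker_eq_bot_of_injective hbij.1) (LinearMap.range_eq_top_of_surjective _ hbij.2)
  refine ⟨e.symm.toContinuousLinearMap, ?_, ?_, ?_, ?_⟩
  · ext x
    simp [e, ContinuousLinearEquiv.ofBijective_symm_apply_apply]
  · ext x
    simp only [ContinuousLinearMap.comp_apply, ContinuousLinearEquiv.coe_coe,
      ContinuousLinearMap.one_apply]
    have : S (e.symm x) = e (e.symm x) := by
      simp [e, ContinuousLinearEquiv.coe_ofBijective]
    rw [this, e.apply_symm_apply]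
  all_goals {
    have hBS : e.symm.toContinuousLinearMap ∘L S = 1 := by
      ext x
      simp [e, ContinuousLinearEquiv.ofBijective_symm_apply_apply]
    have hSB : S ∘L e.symm.toContinuousLinearMap = 1 := by
      ext x
      simp only [ContinuousLinearMap.comp_apply, ContinuousLinearEquiv.coe_coe,
        ContinuousLinearMap.one_apply]
      have : S (e.symm x) = e (e.symm x) := by
        simp [e, ContinuousLinearEquiv.coe_ofBijective]
      rw [this, e.apply_symm_apply]
    set B := e.symm.toContinuousLinearMap
    have hTAB : T = A ∘L B := by
      calc T = T ∘L (S ∘L B) := by rw [hSB]; exact (mul_one _).symm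
        _ = (T ∘L S) ∘L B := by rw [ContinuousLinearMap.comp_assoc]
        _ = A ∘L B := by rw [hTS]
    have hAS : A ∘L S = S ∘L A := by
      rw [hS]
      ext x
      simp only [ContinuousLinearMap.comp_apply, ContinuousLinearMap.sub_apply,
        ContinuousLinearMap.one_apply, ContinuousLinearMap.smul_apply, map_sub, map_smul]
    have hBA : B ∘L A = A ∘L B := by
      calc B ∘L A = (B ∘L A) ∘L (S ∘L B) := by rw [hSB]; exact (mul_one _).symm
        _ = B ∘L (A ∘L S) ∘L B := by
            simp only [ContinuousLinearMap.comp_assoc]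
        _ = B ∘L (S ∘L A) ∘L B := by rw [hAS]
        _ = (B ∘L S) ∘L (A ∘L B) := by simp only [ContinuousLinearMap.comp_assoc]
        _ = A ∘L B := by rw [hBS]; exact one_mul _
    first
      | exact hTAB
      | (calc T ∘L A = (A ∘L B) ∘L A := by rw [← hTAB]
          _ = A ∘L (B ∘L A) := by rw [ContinuousLinearMap.comp_assoc]
          _ = A ∘L (A ∘L B) := by rw [hBA]
          _ = A ∘L T := by rw [← hTAB])
  }
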